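/- The mutation operator M is topologically transitive on (X_N, d): for any pair of nonempty open sets U, V ⊆ X_N, there exists k > 0 such that M^k(U) ∩ V ≠ ∅. -/

import Mathlib

/-- The discrete metric on ℝ: `ddelta x y = 1` if `x ≠ y`, and `0` otherwise. -/
noncomputable def ddelta (x y : ℝ) : ℝ := if x = y then 0 else 1

/-- `Fdel (x₁, x₂) = |x₁| + δ(0, x₂)`. -/
noncomputable def Fdel (x : ℝ × ℝ) : ℝ := |x.1| + ddelta 0 x.2

/-- A single mutation: a position in `{1,…,N}` together with a nucleotide in `{1,2,3,4}`
(encoded with `Fin N` and `Fin 4`). -/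
abbrev Mut (N : ℕ) := Fin N × Fin 4

/-- A mutations sequence: an infinite sequence of mutations. -/
abbrev MutSeq (N : ℕ) := ℕ → Mut N

/-- A genome of size `N`: a sequence of `N` nucleotides in `{1,2,3,4}` (encoded by `Fin 4`,
where `0,1,2,3` stand for the labels `1,2,3,4`, i.e. `A,C,G,T`). -/
abbrev Genome (N : ℕ) := Fin N → Fin 4

/-- The phase space `X_N = {1,2,3,4}^N × S_N`. -/
abbrev Phase (N : ℕ) := Genome N × MutSeq N

/-- A mutation regarded as a pair of real numbers, using the labels
`1,…,N` for positions and `1,2,3,4` for nucleotides. -/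
noncomputable def mutR {N : ℕ} (m : Mut N) : ℝ × ℝ :=
  ((m.1.1 : ℝ) + 1, (m.2.1 : ℝ) + 1)

/-- `d_G(G, Ǧ) = Σ_{k=1}^{N} δ(G_k, Ǧ_k)`, with `δ` the discrete metric. -/
noncomputable def dG {N : ℕ} (G G' : Genome N) : ℝ :=
  ∑ k : Fin N, if G k = G' k then (0 : ℝ) else 1

/-- `d_S(S, Š) = (9/N) Σ_{k=0}^{∞} F(S^k − Š^k)/10^(k+1)`. -/
noncomputable def dS {N : ℕ} (S S' : MutSeq N) : ℝ :=
  (9 / N) * ∑' k : ℕ, Fdel (mutR (S k) - mutR (S' k)) / 10 ^ (k + 1)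

/-- The distance `d((G,S), (Ǧ,Š)) = d_G(G,Ǧ) + d_S(S,Š)` on the phase space. -/
noncomputable def dX {N : ℕ} (X Y : Phase N) : ℝ := dG X.1 Y.1 + dS X.2 Y.2

/-- The mutation operator `M(G, S) = (G', σ(S))`: the nucleotide of `G` at position `(S⁰)₁`
is replaced by the nucleotide `(S⁰)₂`, and the mutations sequence is shifted. -/
noncomputable def Mop {N : ℕ} (X : Phase N) : Phase N :=
  (Function.update X.1 (X.2 0).1 (X.2 0).2, fun k => X.2 (k + 1))

/-- A set `U ⊆ X_N` is open for the metric `d` if around any of its points it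
contains an open ball of positive radius. -/
def IsOpenD {N : ℕ} (U : Set (Phase N)) : Prop :=
  ∀ x ∈ U, ∃ ε > 0, ∀ y, dX x y < ε → y ∈ U

/-! ### Auxiliary material -/

/-- The genome obtained after applying the first `k` mutations of `S` to `G`. -/
noncomputable def applyM {N : ℕ} (G : Genome N) (S : MutSeq N) : ℕ → Genome N
  | 0 => G
  | k + 1 => Function.update (applyM G S k) (S k).1 (S k).2

lemma Mop_iterate {N : ℕ} (G : Genome N) (S : MutSeq N) (k : ℕ) :
    (Mop (N := N))^[k] (G, S) = (applyM G S k, fun j => S (j + k)) := by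
  induction k with
  | zero => simp [applyM]
  | succ k ih =>
    rw [Function.iterate_succ_apply', ih]
    unfold Mop
    refine Prod.ext ?_ ?_
    · show Function.update (applyM G S k) (S (0 + k)).1 (S (0 + k)).2 = applyM G S (k + 1)
      rw [zero_add]; rfl
    · funext j; show S (j + 1 + k) = S (j + (k + 1)); congr 1; omega

lemma applyM_add {N : ℕ} (G : Genome N) (S : MutSeq N) (m n : ℕ) :
    applyM G S (m + n) = applyM (applyM G S m) (fun j => S (m + j)) n := by
  induction n with
  | zero => rfl
  | succ n ih =>
    rw [show m + (n + 1) = (m + n) + 1 from rfl]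
    show Function.update (applyM G S (m + n)) (S (m + n)).1 (S (m + n)).2 = _
    rw [ih]; rfl

lemma applyM_fill {N : ℕ} (G GV : Genome N) (T : MutSeq N)
    (hT : ∀ j (hj : j < N), T j = (⟨j, hj⟩, GV ⟨j, hj⟩)) :
    applyM G T N = GV := by
  have key : ∀ n, n ≤ N → ∀ i : Fin N, applyM G T n i = if i.1 < n then GV i else G i := by
    intro n
    induction n with
    | zero => intro _ i; simp [applyM]
    | succ n ih =>
      intro hn i
      have hn' : n < N := hn
      show Function.update (applyM G T n) (T n).1 (T n).2 i = _
      rw [hT n hn']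
      by_cases hi : i = ⟨n, hn'⟩
      · subst hi; simp
      · rw [Function.update_of_ne hi, ih (le_of_lt hn') i]
        have hne : i.1 ≠ n := fun h => hi (Fin.ext h)
        by_cases h2 : i.1 < n
        · rw [if_pos h2, if_pos (by omega)]
        · rw [if_neg h2, if_neg (by omega)]
  funext i
  rw [key N le_rfl i, if_pos i.2]

lemma Fdel_nonneg (x : ℝ × ℝ) : 0 ≤ Fdel x := by
  unfold Fdel ddelta
  have := abs_nonneg x.1
  split <;> linarith

lemma Fdel_mutR_le {N : ℕ} (hN : 1 ≤ N) (a b : Mut N) :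
    Fdel (mutR a - mutR b) ≤ N := by
  unfold Fdel mutR ddelta
  have ha : (a.1.1 : ℝ) ≤ N - 1 := by
    have := a.1.2
    have : (a.1.1 : ℝ) ≤ (N : ℝ) - 1 := by
      have h := Nat.lt_iff_add_one_le.mp a.1.2
      have : ((a.1.1 : ℕ) : ℝ) + 1 ≤ (N : ℝ) := by exact_mod_cast h
      linarith
    exact this
  have hb : (b.1.1 : ℝ) ≤ N - 1 := by
    have h := Nat.lt_iff_add_one_le.mp b.1.2
    have : ((b.1.1 : ℕ) : ℝ) + 1 ≤ (N : ℝ) := by exact_mod_cast h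
    linarith
  have ha0 : (0 : ℝ) ≤ a.1.1 := Nat.cast_nonneg _
  have hb0 : (0 : ℝ) ≤ b.1.1 := Nat.cast_nonneg _
  have habs : |((a.1.1 : ℝ) + 1) - ((b.1.1 : ℝ) + 1)| ≤ (N : ℝ) - 1 := by
    rw [abs_le]; constructor <;> linarith
  simp only [Prod.fst_sub, Prod.snd_sub]
  split <;> linarith

lemma dS_le {N : ℕ} (hN : 1 ≤ N) (S S' : MutSeq N) (m : ℕ)
    (h : ∀ k, k < m → S k = S' k) : dS S S' ≤ (1 / 10) ^ m := by
  have hN0 : (0 : ℝ) < N := by exact_mod_cast hN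
  set f : ℕ → ℝ := fun k => Fdel (mutR (S k) - mutR (S' k)) / 10 ^ (k + 1) with hf
  set g : ℕ → ℝ := fun k => if k < m then 0 else (N : ℝ) * (1 / 10) ^ (k + 1) with hg
  have hgeo : Summable (fun k : ℕ => ((1 : ℝ) / 10) ^ k) :=
    summable_geometric_of_lt_one (by norm_num) (by norm_num)
  have hgeo1 : Summable (fun k : ℕ => (N : ℝ) * (1 / 10) ^ (k + 1)) := by
    have : Summable (fun k : ℕ => ((1 : ℝ) / 10) ^ (k + 1)) := by
      simpa using hgeo.mul_left (1 / 10 : ℝ) |>.congr (fun k => (by ring : (1 / 10 : ℝ) * (1 / 10) ^ k = (1 / 10) ^ (k + 1)))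
    exact this.mul_left _
  have hfg : ∀ k, f k ≤ g k := by
    intro k
    by_cases hk : k < m
    · simp only [hf, hg, if_pos hk, h k hk]
      have : mutR (S' k) - mutR (S' k) = 0 := sub_self _
      rw [this]
      simp [Fdel, ddelta]
    · simp only [hf, hg, if_neg hk]
      rw [div_le_iff₀ (by positivity)]
      calc Fdel (mutR (S k) - mutR (S' k)) ≤ N := Fdel_mutR_le hN _ _
        _ = (N : ℝ) * (1 / 10) ^ (k + 1) * 10 ^ (k + 1) := by
            rw [mul_assoc, one_div, inv_pow, inv_mul_cancel₀ (by positivity), mul_one]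
  have hfnn : ∀ k, 0 ≤ f k := fun k => div_nonneg (Fdel_nonneg _) (by positivity)
  have hgsum : Summable g := by
    apply Summable.of_nonneg_of_le (fun k => ?_) (fun k => ?_) hgeo1
    · simp only [hg]; split <;> positivity
    · simp only [hg]; split
      · positivity
      · exact le_rfl
  have hfsum : Summable f := Summable.of_nonneg_of_le hfnn hfg hgsum
  have htsumle : ∑' k, f k ≤ ∑' k, g k := Summable.tsum_le_tsum hfg hfsum hgsum
  have hgval : ∑' k, g k = (N : ℝ) * (1 / 10) ^ m / 9 := by
    rw [← Summable.sum_add_tsum_nat_add m hgsum]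
    have h1 : ∑ k ∈ Finset.range m, g k = 0 := by
      apply Finset.sum_eq_zero
      intro k hk
      simp [hg, Finset.mem_range.mp hk]
    have h2 : ∑' k : ℕ, g (k + m) = (N : ℝ) * (1 / 10) ^ m / 9 := by
      have : ∀ k : ℕ, g (k + m) = ((N : ℝ) * (1 / 10) ^ (m + 1)) * (1 / 10) ^ k := by
        intro k
        simp only [hg, if_neg (by omega : ¬ k + m < m)]
        ring
      rw [tsum_congr this, tsum_mul_left, tsum_geometric_of_lt_one (by norm_num) (by norm_num)]
      norm_num
      ring
    rw [h1, h2, zero_add]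
  have : dS S S' ≤ (9 / N) * ((N : ℝ) * (1 / 10) ^ m / 9) := by
    unfold dS
    apply mul_le_mul_of_nonneg_left _ (by positivity)
    rw [← hgval]
    exact htsumle
  calc dS S S' ≤ (9 / N) * ((N : ℝ) * (1 / 10) ^ m / 9) := this
    _ = (1 / 10) ^ m := by field_simp

/-- The mutation operator `M` is topologically transitive on `(X_N, d)`:
for any nonempty open sets `U, V ⊆ X_N`, there is `k > 0` with `M^k(U) ∩ V ≠ ∅`. -/
theorem Mop_topologically_transitive (N : ℕ) (hN : 1 ≤ N) :
    ∀ U V : Set (Phase N), IsOpenD U → IsOpenD V → U.Nonempty → V.Nonempty →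
      ∃ k : ℕ, 0 < k ∧ ((Mop (N := N))^[k] '' U ∩ V).Nonempty := by
  intro U V hU hV hUne hVne
  obtain ⟨⟨GU, SU⟩, hxU⟩ := hUne
  obtain ⟨⟨GV, SV⟩, hxV⟩ := hVne
  obtain ⟨ε, hε, hball⟩ := hU _ hxU
  obtain ⟨m, hm⟩ := exists_pow_lt_of_lt_one hε (by norm_num : (1 : ℝ) / 10 < 1)
  -- the spliced mutations sequence
  set S : MutSeq N := fun k =>
    if h : k < m then SU k
    else if h2 : k - m < N then (⟨k - m, h2⟩, GV ⟨k - m, h2⟩)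
    else SV (k - m - N) with hS
  have hxmem : (GU, S) ∈ U := by
    apply hball
    have hdG : dG GU GU = 0 := by simp [dG]
    have hdS : dS SU S ≤ (1 / 10) ^ m := by
      apply dS_le hN
      intro k hk
      simp [hS, hk]
    show dG GU GU + dS SU S < ε
    rw [hdG, zero_add]
    exact lt_of_le_of_lt hdS hm
  refine ⟨m + N, by omega, (GV, SV), ⟨(GU, S), hxmem, ?_⟩, hxV⟩
  rw [Mop_iterate]
  refine Prod.ext ?_ ?_
  · show applyM GU S (m + N) = GV
    rw [applyM_add]
    apply applyM_fill
    intro j hj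
    simp only [hS]
    rw [dif_neg (by omega : ¬ m + j < m), dif_pos (by omega : m + j - m < N)]
    have : m + j - m = j := by omega
    congr 1 <;> simp [this]
  · funext j
    show S (j + (m + N)) = SV j
    simp only [hS]
    rw [dif_neg (by omega : ¬ j + (m + N) < m), dif_neg (by omega : ¬ j + (m + N) - m < N)]
    congr 1
    omega
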